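/- The Jacobian change-of-variables formula for Φ(ω,λ) = (ω/(1+λ²)^{1/4}, λ|ω|²/(1+λ²)^{1/2}): for every nonnegative measurable f on ℝ^{2n}×ℝ, ∫ f(z,t) dz dt = ∫ f(Φ(ω,λ)) |ω|² (1+λ²)^{−(n+1)/2} dω dλ. -/

import Mathlib

open MeasureTheory Real
open scoped ENNReal

/-- The underlying space `ℝ^{2n} × ℝ`. -/
abbrev HSp (n : ℕ) := (Fin (2 * n) → ℝ) × ℝ

/-- The change of variables `Φ(ω,λ) = (ω/(1+λ²)^{1/4}, λ|ω|²/(1+λ²)^{1/2})`. -/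
noncomputable def Phi {n : ℕ} (p : HSp n) : HSp n :=
  (((1 + p.2 ^ 2) ^ (-(1:ℝ)/4)) • p.1,
    p.2 * (∑ i, (p.1 i) ^ 2) / Real.sqrt (1 + p.2 ^ 2))

private lemma lintegral_comp_mul_aux (g : ℝ → ℝ≥0∞) (hg : Measurable g) {c : ℝ} (hc : 0 < c) :
    ∫⁻ t, g t = ∫⁻ l, g (c * l) * ENNReal.ofReal c := by
  have h1 : ∫⁻ l, g (c * l) = ∫⁻ t, g t ∂(Measure.map (c * ·) volume) := by
    rw [lintegral_map hg (measurable_const_mul c)]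
  rw [lintegral_mul_const' _ _ ENNReal.ofReal_ne_top, h1,
    Real.map_volume_mul_left hc.ne', lintegral_smul_measure]
  rw [abs_of_pos (inv_pos.mpr hc), ENNReal.ofReal_inv_of_pos hc, mul_comm,
    smul_eq_mul, ← mul_assoc, ENNReal.mul_inv_cancel (by simpa using hc) ENNReal.ofReal_ne_top, one_mul]

private lemma lintegral_comp_smul_aux {m : ℕ} (g : (Fin m → ℝ) → ℝ≥0∞) (hg : Measurable g)
    {c : ℝ} (hc : 0 < c) :
    ∫⁻ z, g z = ∫⁻ w, g (c • w) * ENNReal.ofReal (c ^ m) := by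
  have h1 : ∫⁻ w, g (c • w) = ∫⁻ z, g z ∂(Measure.map (c • ·) volume) := by
    rw [lintegral_map hg (measurable_const_smul c)]
  rw [lintegral_mul_const' _ _ ENNReal.ofReal_ne_top, h1,
    Measure.map_addHaar_smul volume hc.ne', lintegral_smul_measure]
  have hfr : Module.finrank ℝ (Fin m → ℝ) = m := by simp
  rw [hfr, abs_of_pos (inv_pos.mpr (pow_pos hc m)), ENNReal.ofReal_inv_of_pos (pow_pos hc m),
    mul_comm, smul_eq_mul, ← mul_assoc, ENNReal.mul_inv_cancel (by simpa using (pow_pos hc m))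
      ENNReal.ofReal_ne_top, one_mul]

/-- The Jacobian change-of-variables formula for `Φ`: for every nonnegative measurable
`f`, `∫ f(z,t) dz dt = ∫ f(Φ(ω,λ)) |ω|² (1+λ²)^{-(n+1)/2} dω dλ`. -/
theorem phi_change_of_variables (n : ℕ) (hn : 1 ≤ n) (f : HSp n → ℝ≥0∞)
    (hf : Measurable f) :
    ∫⁻ x : HSp n, f x
      = ∫⁻ p in {p : HSp n | p.1 ≠ 0},
          f (Phi p) * ENNReal.ofReal
            ((∑ i, (p.1 i) ^ 2) * (1 + p.2 ^ 2) ^ (-(((n : ℝ) + 1) / 2))) := by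
  haveI : Nonempty (Fin (2 * n)) := ⟨⟨0, by omega⟩⟩
  set q : (Fin (2 * n) → ℝ) → ℝ := fun z => ∑ i, z i ^ 2 with hq_def
  have hq_meas : Measurable q := by
    apply Finset.measurable_sum
    exact fun i _ => (measurable_pi_apply i).pow_const 2
  have hq_nonneg : ∀ z, 0 ≤ q z := fun z => Finset.sum_nonneg fun i _ => sq_nonneg _
  have hq_pos : ∀ z : Fin (2 * n) → ℝ, z ≠ 0 → 0 < q z := by
    intro z hz
    obtain ⟨i, hi⟩ : ∃ i, z i ≠ 0 := by
      by_contra h; push_neg at h; exact hz (funext h)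
    exact Finset.sum_pos' (fun j _ => sq_nonneg _) ⟨i, Finset.mem_univ i, by positivity⟩
  set a : ℝ → ℝ := fun l => (1 + l ^ 2) ^ (-(1:ℝ)/4) with ha_def
  have hpos : ∀ l : ℝ, (0:ℝ) < 1 + l ^ 2 := fun l => by positivity
  have ha_pos : ∀ l, 0 < a l := fun l => Real.rpow_pos_of_pos (hpos l) _
  have ha2 : ∀ l, a l ^ 2 = (Real.sqrt (1 + l ^ 2))⁻¹ := by
    intro l
    rw [ha_def, ← Real.rpow_natCast ((1 + l ^ 2) ^ (-(1:ℝ)/4)) 2,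
      ← Real.rpow_mul (hpos l).le, Real.sqrt_eq_rpow, ← Real.rpow_neg (hpos l).le]
    norm_num
  -- the function after the λ-change of variables
  set g : (Fin (2 * n) → ℝ) → ℝ → ℝ≥0∞ := fun z l => f (z, q z * l) * ENNReal.ofReal (q z)
    with hg_def
  have hg_meas : Measurable fun p : HSp n => g p.1 p.2 := by
    apply Measurable.mul
    · exact hf.comp (measurable_fst.prodMk ((hq_meas.comp measurable_fst).mul measurable_snd))
    · exact (ENNReal.measurable_ofReal.comp hq_meas).comp measurable_fst
  -- the target integrand
  set F : HSp n → ℝ≥0∞ := fun p =>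
      f (Phi p) * ENNReal.ofReal (q p.1 * (1 + p.2 ^ 2) ^ (-(((n : ℝ) + 1) / 2))) with hF_def
  have hq_cont : Continuous q := by
    apply continuous_finset_sum
    exact fun i _ => (continuous_apply i).pow 2
  have hPhi_meas : Measurable (Phi (n := n)) := by
    apply Continuous.measurable
    apply Continuous.prodMk
    · exact ((continuous_const.add (continuous_snd.pow 2)).rpow_const
        (fun x => Or.inl (hpos _).ne')).smul continuous_fst
    · exact (continuous_snd.mul (hq_cont.comp continuous_fst)).div
        ((continuous_const.add (continuous_snd.pow 2)).sqrt) (fun x => by positivity)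
  have hF_meas : Measurable F := by
    apply Measurable.mul (hf.comp hPhi_meas)
    exact ENNReal.measurable_ofReal.comp ((hq_meas.comp measurable_fst).mul
      (((continuous_const.add (continuous_snd.pow 2)).rpow_const
        (fun x => Or.inl (hpos _).ne')).measurable))
  -- key pointwise identity
  have hpt : ∀ (w : Fin (2 * n) → ℝ) (l : ℝ),
      g (a l • w) l * ENNReal.ofReal (a l ^ (2 * n)) = F (w, l) := by
    intro w l
    have hqs : q (a l • w) = a l ^ 2 * q w := by
      simp only [hq_def, Pi.smul_apply, smul_eq_mul, mul_pow, ← Finset.mul_sum]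
    have hPhi1 : (Phi (w, l)).1 = a l • w := rfl
    have hPhi2 : (Phi (w, l)).2 = q (a l • w) * l := by
      show l * q w / Real.sqrt (1 + l ^ 2) = q (a l • w) * l
      rw [hqs, ha2 l]; field_simp
    have h1 : f (a l • w, q (a l • w) * l) = f (Phi (w, l)) := by
      rw [← hPhi2]; exact congrArg f (Prod.ext hPhi1.symm rfl)
    have hw : a l ^ 2 * q w * a l ^ (2 * n) = q w * (1 + l ^ 2) ^ (-(((n : ℝ) + 1) / 2)) := by
      have : a l ^ 2 * a l ^ (2 * n) = (1 + l ^ 2) ^ (-(((n : ℝ) + 1) / 2)) := by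
        rw [← pow_add, ha_def, ← Real.rpow_natCast ((1 + l ^ 2) ^ (-(1:ℝ)/4)) (2 + 2 * n),
          ← Real.rpow_mul (hpos l).le]
        congr 1
        push_cast; ring
      rw [mul_comm (a l ^ 2) (q w), mul_assoc, this]
    calc g (a l • w) l * ENNReal.ofReal (a l ^ (2 * n))
        = f (Phi (w, l)) * (ENNReal.ofReal (q (a l • w)) * ENNReal.ofReal (a l ^ (2 * n))) := by
          rw [hg_def]; simp only [h1]; ring
      _ = F (w, l) := by
          rw [← ENNReal.ofReal_mul (by rw [hqs]; positivity), hqs, hw, hF_def]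
  -- the set {p | p.1 = 0} is null
  have hnull : volume {p : HSp n | p.1 = 0} = 0 := by
    have : {p : HSp n | p.1 = 0} = ({(0 : Fin (2 * n) → ℝ)} ×ˢ (Set.univ : Set ℝ)) := by
      ext ⟨z, t⟩; simp [eq_comm]
    rw [this, Measure.volume_eq_prod, Measure.prod_prod, measure_singleton, zero_mul]
  calc ∫⁻ x : HSp n, f x
      = ∫⁻ z, ∫⁻ t, f (z, t) := by
        rw [Measure.volume_eq_prod, lintegral_prod _ hf.aemeasurable]
    _ = ∫⁻ z, ∫⁻ l, g z l := by
        apply lintegral_congr_ae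
        have hz0 : ∀ᵐ z : Fin (2 * n) → ℝ, z ≠ 0 := by
          rw [ae_iff]; simp
        filter_upwards [hz0] with z hz
        exact lintegral_comp_mul_aux (fun t => f (z, t))
          (hf.comp (measurable_const.prodMk measurable_id)) (hq_pos z hz)
    _ = ∫⁻ l, ∫⁻ z, g z l := lintegral_lintegral_swap hg_meas.aemeasurable
    _ = ∫⁻ l, ∫⁻ w, F (w, l) := by
        apply lintegral_congr
        intro l
        rw [lintegral_comp_smul_aux (fun z => g z l)
          (hg_meas.comp (measurable_id.prodMk measurable_const)) (ha_pos l)]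
        exact lintegral_congr fun w => hpt w l
    _ = ∫⁻ w, ∫⁻ l, F (w, l) := (lintegral_lintegral_swap hF_meas.aemeasurable).symm
    _ = ∫⁻ p : HSp n, F p := by
        rw [Measure.volume_eq_prod, lintegral_prod _ hF_meas.aemeasurable]
    _ = ∫⁻ p in {p : HSp n | p.1 ≠ 0}, F p := by
        rw [← setLIntegral_univ]
        exact setLIntegral_congr (ae_eq_univ.mpr (by simpa [Set.compl_setOf] using hnull)).symm
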